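/- arXiv:1906.00455 — 6 statements merged into one kernel-verified Lean document; each statement's English description precedes it below -/
import Mathlib

section
/- For positive integers z·, c1, c2 and positive reals p, q with p ≠ q, the sum ∑_{z=0}^{z·} [Γ(z+c1)/z!] · [Γ(z·−z+c2)/(z·−z)!] · p^z · q^{z·−z} equals the mixed partial derivative (d^{c1−1}/dp^{c1−1})(d^{c2−1}/dq^{c2−1}) of [p^{c1−1} q^{z·+c2} − p^{z·+c1} q^{c2−1}]/(q − p). -/
open Real Finset

private theorem evIter {f g : ℝ → ℝ} {x : ℝ} (h : f =ᶠ[nhds x] g) (n : ℕ) :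
    iteratedDeriv n f x = iteratedDeriv n g x := by
  have H : ∀ m : ℕ, iteratedDeriv m f =ᶠ[nhds x] iteratedDeriv m g := by
    intro m
    induction m with
    | zero => simpa [iteratedDeriv_zero] using h
    | succ m ih => rw [iteratedDeriv_succ, iteratedDeriv_succ]; exact ih.deriv
  exact (H n).eq_of_nhds

private theorem iterDeriv_monomial_sum (s : Finset ℕ) (c : ℕ → ℝ) (e : ℕ → ℕ) (k : ℕ) :
    iteratedDeriv k (fun x : ℝ => ∑ z ∈ s, c z * x ^ e z) =
      fun x : ℝ => ∑ z ∈ s, c z * ((e z).descFactorial k : ℝ) * x ^ (e z - k) := by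
  induction k with
  | zero => simp
  | succ k ih =>
    rw [iteratedDeriv_succ, ih]
    funext x
    rw [deriv_fun_sum (fun i _ => by fun_prop)]
    refine Finset.sum_congr rfl fun z _ => ?_
    rw [deriv_const_mul _ (by fun_prop), deriv_pow_field]
    rw [Nat.descFactorial_succ, Nat.cast_mul, Nat.sub_sub]
    ring

/-- Lemma 1: the normalizing sum of the two-group Poisson-gamma synthesizer equals a
mixed iterated partial derivative of a rational function, for `p, q > 0`, `p ≠ q`. -/
theorem stmt_0 (zdot c₁ c₂ : ℕ) (hz : 0 < zdot) (hc₁ : 0 < c₁) (hc₂ : 0 < c₂)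
    (p q : ℝ) (hp : 0 < p) (hq : 0 < q) (hpq : p ≠ q) :
    ∑ z ∈ Finset.range (zdot + 1),
      (Real.Gamma (z + c₁) / (Nat.factorial z)) *
        (Real.Gamma ((zdot - z : ℕ) + c₂) / (Nat.factorial (zdot - z))) *
          p ^ z * q ^ (zdot - z) =
    iteratedDeriv (c₁ - 1)
      (fun p' : ℝ => iteratedDeriv (c₂ - 1)
        (fun q' : ℝ =>
          (p' ^ (c₁ - 1) * q' ^ (zdot + c₂) - p' ^ (zdot + c₁) * q' ^ (c₂ - 1)) / (q' - p')) q)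
      p := by
  obtain ⟨a, rfl⟩ : ∃ a, c₁ = a + 1 := ⟨c₁ - 1, by omega⟩
  obtain ⟨b, rfl⟩ : ∃ b, c₂ = b + 1 := ⟨c₂ - 1, by omega⟩
  set N := zdot with hN
  simp only [Nat.add_sub_cancel]
  -- the key algebraic identity
  have key : ∀ p' q' : ℝ, q' ≠ p' →
      (p' ^ a * q' ^ (N + (b + 1)) - p' ^ (N + (a + 1)) * q' ^ b) / (q' - p') =
        ∑ z ∈ Finset.range (N + 1), p' ^ (z + a) * q' ^ (N - z + b) := by
    intro p' q' hne
    rw [div_eq_iff (sub_ne_zero.mpr hne)]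
    have h := geom_sum₂_mul p' q' (N + 1)
    have hs : (∑ z ∈ Finset.range (N + 1), p' ^ (z + a) * q' ^ (N - z + b)) =
        (∑ i ∈ Finset.range (N + 1), p' ^ i * q' ^ (N + 1 - 1 - i)) * (p' ^ a * q' ^ b) := by
      rw [Finset.sum_mul]
      refine Finset.sum_congr rfl fun z hz => ?_
      rw [pow_add, pow_add]
      have : N + 1 - 1 - z = N - z := by omega
      rw [this]; ring
    rw [hs]
    linear_combination (p' ^ a * q' ^ b) * h
  -- compute the inner iterated derivative for p' ≠ q
  have inner : ∀ p' : ℝ, p' ≠ q →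
      iteratedDeriv b (fun q' : ℝ =>
          (p' ^ a * q' ^ (N + (b + 1)) - p' ^ (N + (a + 1)) * q' ^ b) / (q' - p')) q =
        ∑ z ∈ Finset.range (N + 1),
          p' ^ (z + a) * ((N - z + b).descFactorial b : ℝ) * q ^ (N - z) := by
    intro p' hne
    have hev : (fun q' : ℝ =>
          (p' ^ a * q' ^ (N + (b + 1)) - p' ^ (N + (a + 1)) * q' ^ b) / (q' - p'))
        =ᶠ[nhds q] fun q' : ℝ => ∑ z ∈ Finset.range (N + 1), p' ^ (z + a) * q' ^ (N - z + b) := by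
      have : {q' : ℝ | q' ≠ p'} ∈ nhds q := isOpen_ne.mem_nhds (Ne.symm hne)
      filter_upwards [this] with q' hq' using key p' q' hq'
    rw [evIter hev, iterDeriv_monomial_sum (Finset.range (N + 1))
      (fun z => p' ^ (z + a)) (fun z => N - z + b) b]
    refine Finset.sum_congr rfl fun z hz => ?_
    have : N - z + b - b = N - z := by omega
    rw [this]
  -- outer: the function of p' agrees near p with a polynomial
  have outer : (fun p' : ℝ => iteratedDeriv b (fun q' : ℝ =>
          (p' ^ a * q' ^ (N + (b + 1)) - p' ^ (N + (a + 1)) * q' ^ b) / (q' - p')) q)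
      =ᶠ[nhds p] fun p' : ℝ => ∑ z ∈ Finset.range (N + 1),
          (((N - z + b).descFactorial b : ℝ) * q ^ (N - z)) * p' ^ (z + a) := by
    have : {p' : ℝ | p' ≠ q} ∈ nhds p := isOpen_ne.mem_nhds hpq
    filter_upwards [this] with p' hp'
    rw [inner p' hp']
    exact Finset.sum_congr rfl fun z _ => by ring
  rw [evIter outer, iterDeriv_monomial_sum (Finset.range (N + 1))
    (fun z => ((N - z + b).descFactorial b : ℝ) * q ^ (N - z)) (fun z => z + a) a]
  refine Finset.sum_congr rfl fun z hz => ?_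
  have hG1 : Real.Gamma (z + (a + 1 : ℕ)) = (Nat.factorial (z + a) : ℝ) := by
    have : ((z : ℝ) + ((a : ℕ) + 1 : ℕ)) = ((z + a : ℕ) : ℝ) + 1 := by push_cast; ring
    rw [this, Real.Gamma_nat_eq_factorial]
  have hG2 : Real.Gamma ((N - z : ℕ) + (b + 1 : ℕ)) = (Nat.factorial (N - z + b) : ℝ) := by
    have : (((N - z : ℕ) : ℝ) + ((b : ℕ) + 1 : ℕ)) = ((N - z + b : ℕ) : ℝ) + 1 := by
      push_cast; ring
    rw [this, Real.Gamma_nat_eq_factorial]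
  rw [hG1, hG2]
  have hd1 : (Nat.factorial (z + a) : ℝ) = (Nat.factorial z : ℝ) * ((z + a).descFactorial a : ℝ) := by
    have := Nat.factorial_mul_descFactorial (show a ≤ z + a by omega)
    rw [show z + a - a = z by omega] at this
    exact_mod_cast this.symm
  have hd2 : (Nat.factorial (N - z + b) : ℝ) =
      (Nat.factorial (N - z) : ℝ) * ((N - z + b).descFactorial b : ℝ) := by
    have := Nat.factorial_mul_descFactorial (show b ≤ N - z + b by omega)
    rw [show N - z + b - b = N - z by omega] at this
    exact_mod_cast this.symm
  rw [hd1, hd2, show z + a - a = z by omega]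
  have hz0 : (Nat.factorial z : ℝ) ≠ 0 := by positivity
  have hz1 : (Nat.factorial (N - z) : ℝ) ≠ 0 := by positivity
  field_simp
end

section
/- Let z·, y1, y2 be nonnegative integers with y2 ≥ 1 and y1 ≥ 0, let α1, α2 > 0, and let z1, z2 be nonnegative integers with z1 + z2 ≤ z·. Then α1/(z·+α1) ≤ [(α1+y1)/(α2+y2−1)] · [(z2+α2+y2−1)/(z1+α1+y1)] ≤ (z·+α2)/α2. -/
/-- Bounds on the privacy ratio of the multinomial-Dirichlet synthesizer with two groups. -/
theorem stmt_2 (zdot y₁ y₂ z₁ z₂ : ℕ) (hy₂ : 1 ≤ y₂) (hz : z₁ + z₂ ≤ zdot)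
    (α₁ α₂ : ℝ) (hα₁ : 0 < α₁) (hα₂ : 0 < α₂) :
    α₁ / (zdot + α₁) ≤
        ((α₁ + y₁) / (α₂ + y₂ - 1)) * ((z₂ + α₂ + y₂ - 1) / (z₁ + α₁ + y₁)) ∧
      ((α₁ + y₁) / (α₂ + y₂ - 1)) * ((z₂ + α₂ + y₂ - 1) / (z₁ + α₁ + y₁)) ≤
        (zdot + α₂) / α₂ := by
  have hy₂' : (1:ℝ) ≤ (y₂:ℝ) := by exact_mod_cast hy₂
  have hz' : (z₁:ℝ) + z₂ ≤ (zdot:ℝ) := by exact_mod_cast hz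
  have hz₁ : (0:ℝ) ≤ z₁ := Nat.cast_nonneg _
  have hz₂ : (0:ℝ) ≤ z₂ := Nat.cast_nonneg _
  have hy₁ : (0:ℝ) ≤ y₁ := Nat.cast_nonneg _
  have hB : (0:ℝ) < α₂ + y₂ - 1 := by linarith
  have hA : (0:ℝ) < α₁ + y₁ := by linarith
  have hd1 : (0:ℝ) < (zdot:ℝ) + α₁ := by positivity
  have hd2 : (0:ℝ) < z₁ + α₁ + y₁ := by linarith
  have hB2 : (0:ℝ) < z₂ + α₂ + y₂ - 1 := by linarith
  constructor
  · rw [div_mul_div_comm, div_le_div_iff₀ hd1 (by positivity)]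
    nlinarith [mul_nonneg hy₁ hz₂, mul_nonneg hz₂ hα₁.le,
      mul_nonneg hy₁ (sub_nonneg.2 hz'), mul_nonneg hα₁.le (sub_nonneg.2 hz'),
      mul_nonneg hy₁ (by linarith : (0:ℝ) ≤ y₂ - 1), mul_nonneg hα₁.le (by linarith : (0:ℝ) ≤ y₂ - 1),
      mul_nonneg hz₁ hy₁]
  · rw [div_mul_div_comm, div_le_div_iff₀ (by positivity) hα₂]
    nlinarith [mul_nonneg hz₁ hα₂.le, mul_nonneg hz₁ hz₂,
      mul_nonneg hα₂.le (sub_nonneg.2 hz'), mul_nonneg hy₁ hα₂.le,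
      mul_nonneg (by linarith : (0:ℝ) ≤ y₂ - 1) (sub_nonneg.2 hz'),
      mul_nonneg hz₂ (by linarith : (0:ℝ) ≤ y₂ - 1), mul_nonneg hz₁ (by linarith : (0:ℝ) ≤ y₂ - 1)]
end

section
/- Let z· ≥ 1 be an integer, ε > 0, and α1, α2 > 0. If min(α1, α2) ≥ z·/(exp(ε) − 1), then for all nonnegative integers y1 ≥ 1, y2 ≥ 1, z1, z2 with z1 + z2 = z·, one has |log([(α1+y1)/(α2+y2−1)] · [(z2+α2+y2−1)/(z1+α1+y1)])| ≤ ε. -/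
open Real

set_option maxHeartbeats 1600000 in
/-- ε-differential privacy condition for the multinomial-Dirichlet synthesizer (I = 2). -/
theorem stmt_3 (zdot : ℕ) (hz : 1 ≤ zdot) (ε : ℝ) (hε : 0 < ε)
    (α₁ α₂ : ℝ) (hα₁ : 0 < α₁) (hα₂ : 0 < α₂)
    (hmin : zdot / (Real.exp ε - 1) ≤ min α₁ α₂) :
    ∀ y₁ y₂ z₁ z₂ : ℕ, 1 ≤ y₁ → 1 ≤ y₂ → z₁ + z₂ = zdot →
      |Real.log (((α₁ + y₁) / (α₂ + y₂ - 1)) *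
        ((z₂ + α₂ + y₂ - 1) / (z₁ + α₁ + y₁)))| ≤ ε := by
  intro y₁ y₂ z₁ z₂ hy₁ hy₂ hzsum
  have hE : 0 < Real.exp ε - 1 := by
    have := Real.add_one_le_exp ε; linarith
  have hy₁' : (1:ℝ) ≤ (y₁:ℝ) := by exact_mod_cast hy₁
  have hy₂' : (1:ℝ) ≤ (y₂:ℝ) := by exact_mod_cast hy₂
  have hzsum' : (z₁:ℝ) + (z₂:ℝ) = (zdot:ℝ) := by exact_mod_cast hzsum
  have hz₁ : (z₁:ℝ) ≤ (zdot:ℝ) := by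
    have : (0:ℝ) ≤ (z₂:ℝ) := Nat.cast_nonneg _
    linarith
  have hz₂ : (z₂:ℝ) ≤ (zdot:ℝ) := by
    have : (0:ℝ) ≤ (z₁:ℝ) := Nat.cast_nonneg _
    linarith
  have h1 : (zdot:ℝ) ≤ α₁ * (Real.exp ε - 1) := by
    have := (div_le_iff₀ hE).mp (le_trans hmin (min_le_left _ _))
    linarith
  have h2 : (zdot:ℝ) ≤ α₂ * (Real.exp ε - 1) := by
    have := (div_le_iff₀ hE).mp (le_trans hmin (min_le_right _ _))
    linarith
  have hA : 0 < α₁ + (y₁:ℝ) := by linarith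
  have hB : 0 < α₂ + (y₂:ℝ) - 1 := by linarith
  have hD : 0 < (z₁:ℝ) + α₁ + (y₁:ℝ) := by
    have : (0:ℝ) ≤ (z₁:ℝ) := Nat.cast_nonneg _
    linarith
  have hC : 0 < (z₂:ℝ) + α₂ + (y₂:ℝ) - 1 := by
    have : (0:ℝ) ≤ (z₂:ℝ) := Nat.cast_nonneg _
    linarith
  have hR : 0 < ((α₁ + (y₁:ℝ)) / (α₂ + (y₂:ℝ) - 1)) *
      (((z₂:ℝ) + α₂ + (y₂:ℝ) - 1) / ((z₁:ℝ) + α₁ + (y₁:ℝ))) := by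
    apply mul_pos (div_pos hA hB) (div_pos hC hD)
  have hR' : ((α₁ + (y₁:ℝ)) / (α₂ + (y₂:ℝ) - 1)) *
      (((z₂:ℝ) + α₂ + (y₂:ℝ) - 1) / ((z₁:ℝ) + α₁ + (y₁:ℝ)))
      = ((α₁ + (y₁:ℝ)) * ((z₂:ℝ) + α₂ + (y₂:ℝ) - 1)) /
        ((α₂ + (y₂:ℝ) - 1) * ((z₁:ℝ) + α₁ + (y₁:ℝ))) := by
    field_simp
  have hexp : Real.exp (-ε) * Real.exp ε = 1 := by
    rw [← Real.exp_add]; simp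
  rw [abs_le]
  constructor
  · rw [Real.le_log_iff_exp_le hR, hR', le_div_iff₀ (mul_pos hB hD)]
    have key : (α₂ + (y₂:ℝ) - 1) * ((z₁:ℝ) + α₁ + (y₁:ℝ)) ≤
        Real.exp ε * ((α₁ + (y₁:ℝ)) * ((z₂:ℝ) + α₂ + (y₂:ℝ) - 1)) := by
      have hz1 : (z₁:ℝ) ≤ (α₁ + (y₁:ℝ)) * (Real.exp ε - 1) := by
        nlinarith [mul_nonneg (Nat.cast_nonneg y₁ : (0:ℝ) ≤ (y₁:ℝ)) hE.le]
      nlinarith [mul_le_mul_of_nonneg_left hz1 hB.le,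
        mul_nonneg hB.le (Nat.cast_nonneg z₂ : (0:ℝ) ≤ z₂)]
    nlinarith [Real.exp_pos (-ε), mul_pos hA hC]
  · rw [Real.log_le_iff_le_exp hR, hR', div_le_iff₀ (mul_pos hB hD)]
    have hz2 : (z₂:ℝ) ≤ (α₂ + (y₂:ℝ) - 1) * (Real.exp ε - 1) := by
      nlinarith [mul_nonneg (sub_nonneg.mpr hy₂') hE.le]
    have step1 : (α₁ + (y₁:ℝ)) * ((z₂:ℝ) + α₂ + (y₂:ℝ) - 1) ≤
        Real.exp ε * ((α₁ + (y₁:ℝ)) * (α₂ + (y₂:ℝ) - 1)) := by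
      nlinarith [mul_le_mul_of_nonneg_left hz2 hA.le]
    have step2 : Real.exp ε * ((α₁ + (y₁:ℝ)) * (α₂ + (y₂:ℝ) - 1)) ≤
        Real.exp ε * ((α₂ + (y₂:ℝ) - 1) * ((z₁:ℝ) + α₁ + (y₁:ℝ))) := by
      apply mul_le_mul_of_nonneg_left _ (Real.exp_pos ε).le
      nlinarith [mul_nonneg hB.le (Nat.cast_nonneg z₁ : (0:ℝ) ≤ (z₁:ℝ))]
    linarith
end

section
/- In the Poisson-gamma synthesizer with I = 2 and equal ratios b_1/n_1 = b_2/n_2, the conditional posterior predictive distribution p(z | y, a, b, z·) of (z_1, z_2) given z_1 + z_2 = z· is the beta-binomial / Dirichlet-multinomial distribution p(z_1) = [Γ(z·+1)/(Γ(z_1+1)Γ(z_2+1))] · [Γ(c_1+c_2)/(Γ(c_1)Γ(c_2))] · [Γ(z_1+c_1)Γ(z_2+c_2)/Γ(z·+c_1+c_2)] with c_i = y_i + a_i; i.e., it coincides with the multinomial-Dirichlet synthesizer with α_i = a_i. -/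
open Real Finset

lemma step_lem (c : ℝ) (hc : 0 < c) (z : ℕ) :
    ((z : ℝ) + 1) * (Real.Gamma ((z + 1 : ℕ) + c) / (Nat.factorial (z + 1))) =
      ((z : ℝ) + c) * (Real.Gamma (z + c) / (Nat.factorial z)) := by
  have h1 : ((z + 1 : ℕ) : ℝ) + c = ((z : ℝ) + c) + 1 := by push_cast; ring
  rw [h1, Real.Gamma_add_one (by positivity)]
  rw [Nat.factorial_succ]
  push_cast
  have hz : ((z : ℝ) + 1) ≠ 0 := by positivity
  field_simp

lemma vander (c₁ c₂ : ℝ) (hc₁ : 0 < c₁) (hc₂ : 0 < c₂) : ∀ n : ℕ,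
    ∑ z ∈ Finset.range (n + 1),
        Real.Gamma (z + c₁) / (Nat.factorial z) *
          (Real.Gamma ((n - z : ℕ) + c₂) / (Nat.factorial (n - z))) =
      Real.Gamma c₁ * Real.Gamma c₂ / Real.Gamma (c₁ + c₂) *
        (Real.Gamma (n + c₁ + c₂) / (Nat.factorial n)) := by
  set a : ℕ → ℝ := fun z => Real.Gamma (z + c₁) / (Nat.factorial z) with ha
  set b : ℕ → ℝ := fun z => Real.Gamma (z + c₂) / (Nat.factorial z) with hb
  intro n
  induction n with
  | zero =>
      simp only [Finset.sum_range_one, Nat.sub_zero, Nat.cast_zero, zero_add,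
        Nat.factorial_zero, Nat.cast_one]
      have h0 : Real.Gamma (c₁ + c₂) ≠ 0 := ne_of_gt (Real.Gamma_pos_of_pos (by positivity))
      field_simp
  | succ n ih =>
      have key : ((n : ℝ) + 1) *
          (∑ z ∈ Finset.range (n + 2), a z * b (n + 1 - z)) =
          ((n : ℝ) + c₁ + c₂) * (∑ z ∈ Finset.range (n + 1), a z * b (n - z)) := by
        have expand : ((n : ℝ) + 1) * (∑ z ∈ Finset.range (n + 2), a z * b (n + 1 - z)) =
            (∑ z ∈ Finset.range (n + 2), (z : ℝ) * (a z * b (n + 1 - z))) +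
            (∑ z ∈ Finset.range (n + 2), ((n + 1 - z : ℕ) : ℝ) * (a z * b (n + 1 - z))) := by
          rw [Finset.mul_sum, ← Finset.sum_add_distrib]
          refine Finset.sum_congr rfl fun z hz => ?_
          have hz' : z ≤ n + 1 := Nat.lt_succ_iff.mp (Finset.mem_range.mp hz)
          have : ((n + 1 - z : ℕ) : ℝ) = (n : ℝ) + 1 - z := by
            push_cast [Nat.cast_sub hz']; ring
          rw [this]; ring
        have first : (∑ z ∈ Finset.range (n + 2), (z : ℝ) * (a z * b (n + 1 - z))) =
            ∑ z ∈ Finset.range (n + 1), ((z : ℝ) + c₁) * (a z * b (n - z)) := by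
          rw [Finset.sum_range_succ' (fun z => (z : ℝ) * (a z * b (n + 1 - z))) (n + 1)]
          simp only [Nat.cast_zero, zero_mul, add_zero]
          refine Finset.sum_congr rfl fun z hz => ?_
          have h1 : n + 1 - (z + 1) = n - z := by omega
          rw [h1]
          have := step_lem c₁ hc₁ z
          push_cast
          calc ((z : ℝ) + 1) * (a (z + 1) * b (n - z))
              = (((z : ℝ) + 1) * a (z + 1)) * b (n - z) := by ring
            _ = (((z : ℝ) + c₁) * a z) * b (n - z) := by
                rw [ha]; simp only []; rw [show ((z : ℝ) + 1) *
                  (Real.Gamma (↑(z + 1) + c₁) / ↑(Nat.factorial (z + 1))) =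
                  ((z : ℝ) + c₁) * (Real.Gamma (↑z + c₁) / ↑(Nat.factorial z)) from this]
            _ = ((z : ℝ) + c₁) * (a z * b (n - z)) := by ring
        have second : (∑ z ∈ Finset.range (n + 2), ((n + 1 - z : ℕ) : ℝ) * (a z * b (n + 1 - z))) =
            ∑ z ∈ Finset.range (n + 1), (((n - z : ℕ) : ℝ) + c₂) * (a z * b (n - z)) := by
          rw [Finset.sum_range_succ (fun z => ((n + 1 - z : ℕ) : ℝ) * (a z * b (n + 1 - z))) (n + 1)]
          simp only [Nat.sub_self, Nat.cast_zero, zero_mul, add_zero]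
          refine Finset.sum_congr rfl fun z hz => ?_
          have hz' : z ≤ n := Nat.lt_succ_iff.mp (Finset.mem_range.mp hz)
          have h1 : n + 1 - z = (n - z) + 1 := by omega
          rw [h1]
          have := step_lem c₂ hc₂ (n - z)
          have h2 : (((n - z) + 1 : ℕ) : ℝ) = ((n - z : ℕ) : ℝ) + 1 := by push_cast; ring
          calc (((n - z) + 1 : ℕ) : ℝ) * (a z * b ((n - z) + 1))
              = a z * ((((n - z : ℕ) : ℝ) + 1) * b ((n - z) + 1)) := by rw [h2]; ring
            _ = a z * ((((n - z : ℕ) : ℝ) + c₂) * b (n - z)) := by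
                rw [hb]; simp only []
                rw [show (((n - z : ℕ) : ℝ) + 1) *
                  (Real.Gamma (↑(n - z + 1) + c₂) / ↑(Nat.factorial (n - z + 1))) =
                  (((n - z : ℕ) : ℝ) + c₂) * (Real.Gamma (↑(n - z) + c₂) / ↑(Nat.factorial (n - z)))
                  from this]
            _ = (((n - z : ℕ) : ℝ) + c₂) * (a z * b (n - z)) := by ring
        rw [expand, first, second, ← Finset.sum_add_distrib, Finset.mul_sum]
        refine Finset.sum_congr rfl fun z hz => ?_
        have hz' : z ≤ n := Nat.lt_succ_iff.mp (Finset.mem_range.mp hz)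
        have : ((n - z : ℕ) : ℝ) = (n : ℝ) - z := by push_cast [Nat.cast_sub hz']; ring
        rw [this]; ring
      -- now conclude
      have hne : ((n : ℝ) + 1) ≠ 0 := by positivity
      have hGadd : Real.Gamma ((n + 1 : ℕ) + c₁ + c₂) =
          ((n : ℝ) + c₁ + c₂) * Real.Gamma ((n : ℝ) + c₁ + c₂) := by
        have : ((n + 1 : ℕ) : ℝ) + c₁ + c₂ = ((n : ℝ) + c₁ + c₂) + 1 := by push_cast; ring
        rw [this, Real.Gamma_add_one (by positivity)]
      have hfact : ((Nat.factorial (n + 1) : ℝ)) = ((n : ℝ) + 1) * (Nat.factorial n) := by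
        rw [Nat.factorial_succ]; push_cast; ring
      have hfn : ((Nat.factorial n : ℝ)) ≠ 0 := by positivity
      have hG : Real.Gamma (c₁ + c₂) ≠ 0 := ne_of_gt (Real.Gamma_pos_of_pos (by positivity))
      rw [ih] at key
      have hS : (∑ z ∈ Finset.range (n + 2), a z * b (n + 1 - z)) =
          ((n : ℝ) + c₁ + c₂) * (Real.Gamma c₁ * Real.Gamma c₂ / Real.Gamma (c₁ + c₂) *
            (Real.Gamma ((n : ℝ) + c₁ + c₂) / (Nat.factorial n))) / ((n : ℝ) + 1) := by
        rw [eq_div_iff hne]; linarith [key]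
      show (∑ z ∈ Finset.range (n + 2), a z * b (n + 1 - z)) = _
      rw [hS, hGadd, hfact]
      field_simp

/-- With equal ratios `b₁/n₁ = b₂/n₂`, the constrained Poisson-gamma posterior predictive
of `(z₁, z₂)` given `z₁ + z₂ = z·` is the beta-binomial (Dirichlet-multinomial)
distribution with parameters `cᵢ = yᵢ + aᵢ`. -/
theorem stmt_12 (n₁ n₂ b₁ b₂ a₁ a₂ : ℝ)
    (hn₁ : 0 < n₁) (hn₂ : 0 < n₂) (hb₁ : 0 < b₁) (hb₂ : 0 < b₂)
    (ha₁ : 0 < a₁) (ha₂ : 0 < a₂) (heq : b₁ / n₁ = b₂ / n₂)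
    (y₁ y₂ zdot z₁ z₂ : ℕ) (hz : z₁ + z₂ = zdot) :
    ((Real.Gamma (z₁ + y₁ + a₁) / (Nat.factorial z₁)) * (n₁ / (b₁ + 2 * n₁)) ^ z₁ *
          ((Real.Gamma (z₂ + y₂ + a₂) / (Nat.factorial z₂)) * (n₂ / (b₂ + 2 * n₂)) ^ z₂)) /
        (∑ z ∈ Finset.range (zdot + 1),
          (Real.Gamma (z + y₁ + a₁) / (Nat.factorial z)) * (n₁ / (b₁ + 2 * n₁)) ^ z *
            ((Real.Gamma ((zdot - z : ℕ) + y₂ + a₂) / (Nat.factorial (zdot - z))) *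
              (n₂ / (b₂ + 2 * n₂)) ^ (zdot - z))) =
      (Real.Gamma (zdot + 1) / (Real.Gamma (z₁ + 1) * Real.Gamma (z₂ + 1))) *
        (Real.Gamma ((y₁ + a₁) + (y₂ + a₂)) /
            (Real.Gamma (y₁ + a₁) * Real.Gamma (y₂ + a₂))) *
          (Real.Gamma (z₁ + y₁ + a₁) * Real.Gamma (z₂ + y₂ + a₂) /
            Real.Gamma (zdot + ((y₁ + a₁) + (y₂ + a₂)))) := by
  have hq : n₂ / (b₂ + 2 * n₂) = n₁ / (b₁ + 2 * n₁) := by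
    rw [div_eq_div_iff (by positivity) (by positivity)] at heq ⊢
    nlinarith [heq]
  set q : ℝ := n₁ / (b₁ + 2 * n₁) with hqdef
  have hqpos : 0 < q := by positivity
  set c₁ : ℝ := (y₁ : ℝ) + a₁ with hc₁
  set c₂ : ℝ := (y₂ : ℝ) + a₂ with hc₂
  have hcp₁ : 0 < c₁ := by positivity
  have hcp₂ : 0 < c₂ := by positivity
  have hnum : Real.Gamma (z₁ + y₁ + a₁) / (Nat.factorial z₁) * q ^ z₁ *
      (Real.Gamma (z₂ + y₂ + a₂) / (Nat.factorial z₂) * q ^ z₂) =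
      Real.Gamma ((z₁ : ℝ) + c₁) / (Nat.factorial z₁) *
        (Real.Gamma ((z₂ : ℝ) + c₂) / (Nat.factorial z₂)) * q ^ zdot := by
    rw [← hz, pow_add]
    rw [show ((z₁ : ℝ) + y₁ + a₁) = (z₁ : ℝ) + c₁ by rw [hc₁]; ring,
        show ((z₂ : ℝ) + y₂ + a₂) = (z₂ : ℝ) + c₂ by rw [hc₂]; ring]
    ring
  have hden : (∑ z ∈ Finset.range (zdot + 1),
      (Real.Gamma (z + y₁ + a₁) / (Nat.factorial z)) * q ^ z *
        ((Real.Gamma ((zdot - z : ℕ) + y₂ + a₂) / (Nat.factorial (zdot - z))) *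
          q ^ (zdot - z))) =
      (∑ z ∈ Finset.range (zdot + 1),
        Real.Gamma (z + c₁) / (Nat.factorial z) *
          (Real.Gamma ((zdot - z : ℕ) + c₂) / (Nat.factorial (zdot - z)))) * q ^ zdot := by
    rw [Finset.sum_mul]
    refine Finset.sum_congr rfl fun z hzz => ?_
    have hzle : z ≤ zdot := Nat.lt_succ_iff.mp (Finset.mem_range.mp hzz)
    have hpow : q ^ z * q ^ (zdot - z) = q ^ zdot := by
      rw [← pow_add, Nat.add_sub_cancel' hzle]
    rw [show ((z : ℝ) + y₁ + a₁) = (z : ℝ) + c₁ by rw [hc₁]; ring,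
        show (((zdot - z : ℕ) : ℝ) + y₂ + a₂) = ((zdot - z : ℕ) : ℝ) + c₂ by rw [hc₂]; ring]
    calc Real.Gamma ((z : ℝ) + c₁) / (Nat.factorial z) * q ^ z *
          (Real.Gamma (((zdot - z : ℕ) : ℝ) + c₂) / (Nat.factorial (zdot - z)) * q ^ (zdot - z))
        = Real.Gamma ((z : ℝ) + c₁) / (Nat.factorial z) *
          (Real.Gamma (((zdot - z : ℕ) : ℝ) + c₂) / (Nat.factorial (zdot - z))) *
            (q ^ z * q ^ (zdot - z)) := by ring
      _ = _ := by rw [hpow]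
  rw [hq, hnum, hden, vander c₁ c₂ hcp₁ hcp₂ zdot]
  have hqz : q ^ zdot ≠ 0 := by positivity
  rw [mul_div_mul_right _ _ hqz]
  have hF1 : Real.Gamma ((z₁ : ℝ) + 1) = Nat.factorial z₁ := Real.Gamma_nat_eq_factorial z₁
  have hF2 : Real.Gamma ((z₂ : ℝ) + 1) = Nat.factorial z₂ := Real.Gamma_nat_eq_factorial z₂
  have hFd : Real.Gamma ((zdot : ℝ) + 1) = Nat.factorial zdot := Real.Gamma_nat_eq_factorial zdot
  rw [show ((z₁ : ℝ) + y₁ + a₁) = (z₁ : ℝ) + c₁ by rw [hc₁]; ring,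
      show ((z₂ : ℝ) + y₂ + a₂) = (z₂ : ℝ) + c₂ by rw [hc₂]; ring,
      show ((zdot : ℝ) + (c₁ + c₂)) = (zdot : ℝ) + c₁ + c₂ by ring,
      hF1, hF2, hFd]
  have h1 : (0:ℝ) < Real.Gamma c₁ := Real.Gamma_pos_of_pos hcp₁
  have h2 : (0:ℝ) < Real.Gamma c₂ := Real.Gamma_pos_of_pos hcp₂
  have h3 : (0:ℝ) < Real.Gamma (c₁ + c₂) := Real.Gamma_pos_of_pos (by positivity)
  have h4 : (0:ℝ) < Real.Gamma ((zdot : ℝ) + c₁ + c₂) := Real.Gamma_pos_of_pos (by positivity)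
  have hf1 : ((Nat.factorial z₁ : ℝ)) ≠ 0 := by positivity
  have hf2 : ((Nat.factorial z₂ : ℝ)) ≠ 0 := by positivity
  have hfd : ((Nat.factorial zdot : ℝ)) ≠ 0 := by positivity
  field_simp
end

section
/- Let ε > 0 and z· be a positive integer, and suppose α ≥ z·/(e^ε − 1). Then for every pair of nonnegative integer vectors y, x of length I ≥ 2 with ∑ y_i = ∑ x_i, ‖x − y‖₁ = 2, and every nonnegative integer vector z with ∑ z_i = z·, the multinomial-Dirichlet posterior predictive probabilities with α_i = α satisfy e^{−ε} ≤ p(z | y, α)/p(z | x, α) ≤ e^ε. -/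
open Real Finset

/-- The Dirichlet-multinomial posterior predictive with common prior parameter `α`. -/
noncomputable def dmPredVec {I : ℕ} (α : ℝ) (y z : Fin I → ℕ) : ℝ :=
  ((Nat.factorial (∑ i, z i) : ℝ) / ∏ i, (Nat.factorial (z i) : ℝ)) *
    (Real.Gamma (∑ i, ((y i : ℝ) + α)) / ∏ i, Real.Gamma ((y i : ℝ) + α)) *
      ((∏ i, Real.Gamma ((z i : ℝ) + (y i : ℝ) + α)) /
        Real.Gamma (∑ i, ((z i : ℝ) + (y i : ℝ) + α)))


lemma nat_sum_eq_one {I : ℕ} (f : Fin I → ℕ) (h : ∑ i, f i = 1) :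
    ∃ j, f j = 1 ∧ ∀ i, i ≠ j → f i = 0 := by
  obtain ⟨j, hj⟩ : ∃ j, f j ≠ 0 := by
    by_contra h'; push_neg at h'; simp [h'] at h
  have hle : f j ≤ 1 := h ▸ Finset.single_le_sum (fun i _ => Nat.zero_le _) (Finset.mem_univ j)
  have hfj : f j = 1 := le_antisymm hle (Nat.one_le_iff_ne_zero.2 hj)
  refine ⟨j, hfj, fun i hi => ?_⟩
  have hsplit := Finset.add_sum_erase Finset.univ f (Finset.mem_univ j)
  have h0 : ∑ i ∈ Finset.univ.erase j, f i = 0 := by omega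
  exact (Finset.sum_eq_zero_iff.1 h0) i (Finset.mem_erase.2 ⟨hi, Finset.mem_univ i⟩)


lemma dm_ratio_eq {I : ℕ} (α : ℝ) (hα0 : 0 < α) (y x z : Fin I → ℕ)
    (hsum : ∑ i, y i = ∑ i, x i)
    (j k : Fin I) (hjk : j ≠ k) (hxj : x j = y j + 1) (hxk : x k + 1 = y k)
    (hoth : ∀ i, i ≠ j → i ≠ k → x i = y i) :
    dmPredVec α y z / dmPredVec α x z =
      (((y j : ℝ) + α) / ((z j : ℝ) + (y j : ℝ) + α)) *
        (((z k : ℝ) + (x k : ℝ) + α) / ((x k : ℝ) + α)) := by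
  have hApos : ∀ i, (0:ℝ) < (y i : ℝ) + α := fun i => by positivity
  have hBpos : ∀ i, (0:ℝ) < (x i : ℝ) + α := fun i => by positivity
  have hCpos : ∀ i, (0:ℝ) < (z i : ℝ) + (y i : ℝ) + α := fun i => by positivity
  have hDpos : ∀ i, (0:ℝ) < (z i : ℝ) + (x i : ℝ) + α := fun i => by positivity
  -- equal sums
  have e1 : ∑ i, ((x i : ℝ) + α) = ∑ i, ((y i : ℝ) + α) := by
    rw [Finset.sum_add_distrib, Finset.sum_add_distrib]
    have : (∑ i, (y i : ℝ)) = ∑ i, (x i : ℝ) := by exact_mod_cast hsum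
    linarith
  have e2 : ∑ i, ((z i : ℝ) + (x i : ℝ) + α) = ∑ i, ((z i : ℝ) + (y i : ℝ) + α) := by
    simp only [Finset.sum_add_distrib]
    have : (∑ i, (y i : ℝ)) = ∑ i, (x i : ℝ) := by exact_mod_cast hsum
    linarith
  -- product relations
  have hkmem : k ∈ Finset.univ.erase j := Finset.mem_erase.2 ⟨hjk.symm, Finset.mem_univ k⟩
  have prodsplit : ∀ g : Fin I → ℝ, ∏ i, g i = g j * (g k * ∏ i ∈ (Finset.univ.erase j).erase k, g i) := by
    intro g
    rw [← Finset.mul_prod_erase _ _ (Finset.mem_univ j), ← Finset.mul_prod_erase _ _ hkmem]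
  have hothmem : ∀ i, i ∈ (Finset.univ.erase j).erase k → x i = y i := fun i hi =>
    hoth i (Finset.mem_erase.1 (Finset.mem_erase.1 hi).2).1 (Finset.mem_erase.1 hi).1
  -- cast versions of coordinate relations
  have hxjR : (x j : ℝ) + α = ((y j : ℝ) + α) + 1 := by push_cast [hxj]; ring
  have hykR : (y k : ℝ) + α = ((x k : ℝ) + α) + 1 := by
    have : y k = x k + 1 := hxk.symm
    push_cast [this]; ring
  have hzxjR : (z j : ℝ) + (x j : ℝ) + α = ((z j : ℝ) + (y j : ℝ) + α) + 1 := by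
    push_cast [hxj]; ring
  have hzykR : (z k : ℝ) + (y k : ℝ) + α = ((z k : ℝ) + (x k : ℝ) + α) + 1 := by
    have : y k = x k + 1 := hxk.symm
    push_cast [this]; ring
  have hP : (∏ i, Real.Gamma ((x i : ℝ) + α)) * ((x k : ℝ) + α) =
      (∏ i, Real.Gamma ((y i : ℝ) + α)) * ((y j : ℝ) + α) := by
    rw [prodsplit (fun i => Real.Gamma ((x i : ℝ) + α)),
        prodsplit (fun i => Real.Gamma ((y i : ℝ) + α))]
    rw [Finset.prod_congr rfl fun i hi => by rw [hothmem i hi]]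
    rw [hxjR, hykR, Real.Gamma_add_one (ne_of_gt (hApos j)), Real.Gamma_add_one (ne_of_gt (hBpos k))]
    ring
  have hQ : (∏ i, Real.Gamma ((z i : ℝ) + (x i : ℝ) + α)) * ((z k : ℝ) + (x k : ℝ) + α) =
      (∏ i, Real.Gamma ((z i : ℝ) + (y i : ℝ) + α)) * ((z j : ℝ) + (y j : ℝ) + α) := by
    rw [prodsplit (fun i => Real.Gamma ((z i : ℝ) + (x i : ℝ) + α)),
        prodsplit (fun i => Real.Gamma ((z i : ℝ) + (y i : ℝ) + α))]
    rw [Finset.prod_congr rfl fun i hi => by rw [hothmem i hi]]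
    rw [hzxjR, hzykR, Real.Gamma_add_one (ne_of_gt (hCpos j)), Real.Gamma_add_one (ne_of_gt (hDpos k))]
    ring
  -- positivity of all pieces
  have hPA : (0:ℝ) < ∏ i, Real.Gamma ((y i : ℝ) + α) :=
    Finset.prod_pos fun i _ => Real.Gamma_pos_of_pos (hApos i)
  have hPB : (0:ℝ) < ∏ i, Real.Gamma ((x i : ℝ) + α) :=
    Finset.prod_pos fun i _ => Real.Gamma_pos_of_pos (hBpos i)
  have hQA : (0:ℝ) < ∏ i, Real.Gamma ((z i : ℝ) + (y i : ℝ) + α) :=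
    Finset.prod_pos fun i _ => Real.Gamma_pos_of_pos (hCpos i)
  have hQB : (0:ℝ) < ∏ i, Real.Gamma ((z i : ℝ) + (x i : ℝ) + α) :=
    Finset.prod_pos fun i _ => Real.Gamma_pos_of_pos (hDpos i)
  have hS : (0:ℝ) < Real.Gamma (∑ i, ((y i : ℝ) + α)) :=
    Real.Gamma_pos_of_pos (Finset.sum_pos (fun i _ => hApos i) ⟨j, Finset.mem_univ j⟩)
  have hT : (0:ℝ) < Real.Gamma (∑ i, ((z i : ℝ) + (y i : ℝ) + α)) :=
    Real.Gamma_pos_of_pos (Finset.sum_pos (fun i _ => hCpos i) ⟨j, Finset.mem_univ j⟩)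
  have hC1 : (0:ℝ) < (Nat.factorial (∑ i, z i) : ℝ) := by positivity
  have hC2 : (0:ℝ) < ∏ i, (Nat.factorial (z i) : ℝ) :=
    Finset.prod_pos fun i _ => by positivity
  have hPB' : (∏ i, Real.Gamma ((x i : ℝ) + α)) =
      ((∏ i, Real.Gamma ((y i : ℝ) + α)) * ((y j : ℝ) + α)) / ((x k : ℝ) + α) := by
    rw [eq_div_iff (ne_of_gt (hBpos k))]; exact hP
  have hQB' : (∏ i, Real.Gamma ((z i : ℝ) + (x i : ℝ) + α)) =
      ((∏ i, Real.Gamma ((z i : ℝ) + (y i : ℝ) + α)) * ((z j : ℝ) + (y j : ℝ) + α)) /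
        ((z k : ℝ) + (x k : ℝ) + α) := by
    rw [eq_div_iff (ne_of_gt (hDpos k))]; exact hQ
  unfold dmPredVec
  rw [e1, e2, hPB', hQB']
  field_simp

/-- ε-differential privacy of the multinomial-Dirichlet synthesizer with common prior
parameter `α ≥ z·/(e^ε − 1)`, for neighboring datasets. -/
theorem stmt_14 (ε : ℝ) (hε : 0 < ε) (zdot : ℕ) (hz : 0 < zdot)
    (α : ℝ) (hα : (zdot : ℝ) / (Real.exp ε - 1) ≤ α)
    (I : ℕ) (hI : 2 ≤ I) (y x z : Fin I → ℕ)
    (hsum : ∑ i, y i = ∑ i, x i)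
    (hnbr : ∑ i, |(x i : ℤ) - (y i : ℤ)| = 2)
    (hzsum : ∑ i, z i = zdot) :
    Real.exp (-ε) ≤ dmPredVec α y z / dmPredVec α x z ∧
      dmPredVec α y z / dmPredVec α x z ≤ Real.exp ε := by
  -- basic facts about α and exp ε
  have h1e : 1 < Real.exp ε := by rw [← Real.exp_zero]; exact Real.exp_lt_exp.2 hε
  have hα0 : 0 < α :=
    lt_of_lt_of_le (div_pos (by exact_mod_cast hz) (by linarith)) hα
  have hzdα : (zdot : ℝ) ≤ α * (Real.exp ε - 1) := by
    rw [div_le_iff₀ (by linarith)] at hα; linarith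
  -- extract the two coordinates where x and y differ
  obtain ⟨j, k, hjk, hxj, hxk, hoth⟩ :
      ∃ j k : Fin I, j ≠ k ∧ x j = y j + 1 ∧ x k + 1 = y k ∧
        ∀ i, i ≠ j → i ≠ k → x i = y i := by
    set d : Fin I → ℤ := fun i => (x i : ℤ) - y i with hd
    have hd0 : ∑ i, d i = 0 := by
      simp only [hd, Finset.sum_sub_distrib]
      have h1 : (∑ i, (y i : ℤ)) = ∑ i, (x i : ℤ) := by exact_mod_cast hsum
      linarith
    have habs : ∀ a : ℤ, |a| = max a 0 + max (-a) 0 := by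
      intro a; rcases le_total a 0 with h | h <;>
        simp [abs_of_nonpos, abs_of_nonneg, max_eq_left, max_eq_right, *]
    have hsplit : ∑ i, |d i| = ∑ i, max (d i) 0 + ∑ i, max (-d i) 0 := by
      rw [← Finset.sum_add_distrib]; exact Finset.sum_congr rfl fun i _ => habs (d i)
    have hsub : ∑ i, max (d i) 0 - ∑ i, max (-d i) 0 = ∑ i, d i := by
      rw [← Finset.sum_sub_distrib]; exact Finset.sum_congr rfl fun i _ => by omega
    have hP : ∑ i, max (d i) 0 = 1 := by linarith
    have hN : ∑ i, max (-d i) 0 = 1 := by linarith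
    have hPn : ∑ i, (d i).toNat = 1 := by
      have : ((∑ i, (d i).toNat : ℕ) : ℤ) = 1 := by
        push_cast [Int.toNat_eq_max]; exact hP
      exact_mod_cast this
    have hNn : ∑ i, (-(d i)).toNat = 1 := by
      have : ((∑ i, (-(d i)).toNat : ℕ) : ℤ) = 1 := by
        push_cast [Int.toNat_eq_max]; exact hN
      exact_mod_cast this
    obtain ⟨j, hj1, hj0⟩ := nat_sum_eq_one _ hPn
    obtain ⟨k, hk1, hk0⟩ := nat_sum_eq_one _ hNn
    have hdj : d j = 1 := by omega
    have hdk : d k = -1 := by omega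
    have hjk : j ≠ k := by intro h; rw [h] at hdj; omega
    refine ⟨j, k, hjk, by have := hdj; simp [hd] at this; omega,
      by have := hdk; simp [hd] at this; omega, fun i hij hik => ?_⟩
    have h1 := hj0 i hij
    have h2 := hk0 i hik
    have : d i = 0 := by omega
    simp [hd] at this; omega
  -- ratio formula
  rw [dm_ratio_eq α hα0 y x z hsum j k hjk hxj hxk hoth]
  -- bounds on the two factors
  have hzj : (z j : ℝ) ≤ (zdot : ℝ) := by
    exact_mod_cast hzsum ▸ Finset.single_le_sum (f := fun i => z i)
      (fun i _ => Nat.zero_le _) (Finset.mem_univ j)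
  have hzk : (z k : ℝ) ≤ (zdot : ℝ) := by
    exact_mod_cast hzsum ▸ Finset.single_le_sum (f := fun i => z i)
      (fun i _ => Nat.zero_le _) (Finset.mem_univ k)
  have hyj : (0:ℝ) ≤ (y j : ℝ) := Nat.cast_nonneg _
  have hxkR : (0:ℝ) ≤ (x k : ℝ) := Nat.cast_nonneg _
  have hzjn : (0:ℝ) ≤ (z j : ℝ) := Nat.cast_nonneg _
  have hzkn : (0:ℝ) ≤ (z k : ℝ) := Nat.cast_nonneg _
  have haj : (0:ℝ) < (y j : ℝ) + α := by linarith
  have hcj : (0:ℝ) < (z j : ℝ) + (y j : ℝ) + α := by linarith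
  have hbk : (0:ℝ) < (x k : ℝ) + α := by linarith
  have hdk : (0:ℝ) < (z k : ℝ) + (x k : ℝ) + α := by linarith
  have hexp : Real.exp (-ε) * Real.exp ε = 1 := by
    rw [← Real.exp_add]; simp
  have hepos : (0:ℝ) < Real.exp (-ε) := Real.exp_pos _
  -- first factor in [exp(-ε), 1]
  have hf1_le : ((y j : ℝ) + α) / ((z j : ℝ) + (y j : ℝ) + α) ≤ 1 :=
    div_le_one_of_le₀ (by linarith) (le_of_lt hcj)
  have hf1_ge : Real.exp (-ε) ≤ ((y j : ℝ) + α) / ((z j : ℝ) + (y j : ℝ) + α) := by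
    rw [le_div_iff₀ hcj]
    nlinarith [hexp, hepos, hzdα, hzj, hα0, hyj]
  -- second factor in [1, exp ε]
  have hf2_ge : (1:ℝ) ≤ ((z k : ℝ) + (x k : ℝ) + α) / ((x k : ℝ) + α) := by
    rw [le_div_iff₀ hbk]; linarith
  have hf2_le : ((z k : ℝ) + (x k : ℝ) + α) / ((x k : ℝ) + α) ≤ Real.exp ε := by
    rw [div_le_iff₀ hbk]
    nlinarith [hzdα, hzk, hα0, hxkR]
  have hf1_pos : (0:ℝ) < ((y j : ℝ) + α) / ((z j : ℝ) + (y j : ℝ) + α) := div_pos haj hcj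
  have hf2_pos : (0:ℝ) < ((z k : ℝ) + (x k : ℝ) + α) / ((x k : ℝ) + α) := div_pos hdk hbk
  constructor
  · calc Real.exp (-ε) = Real.exp (-ε) * 1 := by ring
    _ ≤ (((y j : ℝ) + α) / ((z j : ℝ) + (y j : ℝ) + α)) *
        (((z k : ℝ) + (x k : ℝ) + α) / ((x k : ℝ) + α)) :=
      mul_le_mul hf1_ge hf2_ge zero_le_one (le_of_lt hf1_pos)
  · calc (((y j : ℝ) + α) / ((z j : ℝ) + (y j : ℝ) + α)) *
        (((z k : ℝ) + (x k : ℝ) + α) / ((x k : ℝ) + α))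
        ≤ 1 * Real.exp ε :=
      mul_le_mul hf1_le hf2_le (le_of_lt hf2_pos) zero_le_one
    _ = Real.exp ε := by ring
end

section
/- For the two-group constrained Poisson-gamma synthesizer, the privacy ratio factorizes as p(z|y,a,b)/p(z|x,a,b) = [C(x,n,a,b,z·)/C(y,n,a,b,z·)] · [Γ(z_1+y_1+a_1)/Γ(z_1+x_1+a_1)] · [Γ(z_2+y_2+a_2)/Γ(z_2+x_2+a_2)], where C(y,n,a,b,z·) = ∑_{z=0}^{z·} [Γ(z+y_1+a_1)/z!][Γ(z·−z+y_2+a_2)/(z·−z)!] r^z with r = r_1(n,b); in particular the geometric factors (n_i/(b_i+2n_i))^{z_i} cancel in the ratio. -/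
open Real Finset

/-- Equation (8): the conditional posterior predictive of `(z₁, z₂)` with `z₁ + z₂ = z·`
under the two-group Poisson-gamma synthesizer. -/
noncomputable def pgPred (n₁ n₂ b₁ b₂ a₁ a₂ : ℝ) (y₁ y₂ zdot z₁ z₂ : ℕ) : ℝ :=
  ((Real.Gamma (z₁ + y₁ + a₁) / (Nat.factorial z₁)) * (n₁ / (b₁ + 2 * n₁)) ^ z₁ *
      ((Real.Gamma (z₂ + y₂ + a₂) / (Nat.factorial z₂)) * (n₂ / (b₂ + 2 * n₂)) ^ z₂)) /
    (∑ z ∈ Finset.range (zdot + 1),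
      (Real.Gamma (z + y₁ + a₁) / (Nat.factorial z)) * (n₁ / (b₁ + 2 * n₁)) ^ z *
        ((Real.Gamma ((zdot - z : ℕ) + y₂ + a₂) / (Nat.factorial (zdot - z))) *
          (n₂ / (b₂ + 2 * n₂)) ^ (zdot - z)))

/-- Equation (9): the normalizing constant `C(y, n, a, b, z·)` with
`r = r₁(n,b) = (b₂/n₂ + 2)/(b₁/n₁ + 2)`. -/
noncomputable def pgC (n₁ n₂ b₁ b₂ a₁ a₂ : ℝ) (y₁ y₂ zdot : ℕ) : ℝ :=
  ∑ z ∈ Finset.range (zdot + 1),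
    (Real.Gamma (z + y₁ + a₁) / (Nat.factorial z)) *
      (Real.Gamma ((zdot - z : ℕ) + y₂ + a₂) / (Nat.factorial (zdot - z))) *
        ((b₂ / n₂ + 2) / (b₁ / n₁ + 2)) ^ z


lemma pgC_pos (n₁ n₂ b₁ b₂ a₁ a₂ : ℝ)
    (hn₁ : 0 < n₁) (hn₂ : 0 < n₂) (hb₁ : 0 < b₁) (hb₂ : 0 < b₂)
    (ha₁ : 0 < a₁) (ha₂ : 0 < a₂) (y₁ y₂ zdot : ℕ) :
    0 < ∑ z ∈ Finset.range (zdot + 1),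
      (Real.Gamma (z + y₁ + a₁) / (Nat.factorial z)) *
        (Real.Gamma ((zdot - z : ℕ) + y₂ + a₂) / (Nat.factorial (zdot - z))) *
          ((b₂ / n₂ + 2) / (b₁ / n₁ + 2)) ^ z := by
  apply Finset.sum_pos
  · intro z hz
    have h1 : 0 < Real.Gamma (z + y₁ + a₁) := Real.Gamma_pos_of_pos (by positivity)
    have h2 : 0 < Real.Gamma ((zdot - z : ℕ) + y₂ + a₂) := Real.Gamma_pos_of_pos (by positivity)
    have hf1 : (0:ℝ) < Nat.factorial z := by positivity
    have hf2 : (0:ℝ) < Nat.factorial (zdot - z) := by positivity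
    have hr : (0:ℝ) < (b₂ / n₂ + 2) / (b₁ / n₁ + 2) := by positivity
    positivity
  · exact ⟨0, Finset.mem_range.2 (Nat.succ_pos _)⟩

lemma pgPred_eq (n₁ n₂ b₁ b₂ a₁ a₂ : ℝ)
    (hn₁ : 0 < n₁) (hn₂ : 0 < n₂) (hb₁ : 0 < b₁) (hb₂ : 0 < b₂)
    (y₁ y₂ zdot z₁ z₂ : ℕ) (hz : z₁ + z₂ = zdot) :
    pgPred n₁ n₂ b₁ b₂ a₁ a₂ y₁ y₂ zdot z₁ z₂ =
      ((Real.Gamma (z₁ + y₁ + a₁) / (Nat.factorial z₁)) *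
        (Real.Gamma (z₂ + y₂ + a₂) / (Nat.factorial z₂)) *
          ((b₂ / n₂ + 2) / (b₁ / n₁ + 2)) ^ z₁) /
        pgC n₁ n₂ b₁ b₂ a₁ a₂ y₁ y₂ zdot := by
  set P₂ : ℝ := n₂ / (b₂ + 2 * n₂) with hP₂
  set r : ℝ := (b₂ / n₂ + 2) / (b₁ / n₁ + 2) with hr
  have hP₂pos : 0 < P₂ := by positivity
  have hP1 : n₁ / (b₁ + 2 * n₁) = r * P₂ := by
    rw [hr, hP₂]
    field_simp
  have hden : (∑ z ∈ Finset.range (zdot + 1),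
      (Real.Gamma (z + y₁ + a₁) / (Nat.factorial z)) * (n₁ / (b₁ + 2 * n₁)) ^ z *
        ((Real.Gamma ((zdot - z : ℕ) + y₂ + a₂) / (Nat.factorial (zdot - z))) *
          P₂ ^ (zdot - z))) = P₂ ^ zdot * pgC n₁ n₂ b₁ b₂ a₁ a₂ y₁ y₂ zdot := by
    rw [pgC, Finset.mul_sum]
    apply Finset.sum_congr rfl
    intro z hzz
    have hzle : z ≤ zdot := Nat.lt_succ_iff.mp (Finset.mem_range.mp hzz)
    have : P₂ ^ z * P₂ ^ (zdot - z) = P₂ ^ zdot := by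
      rw [← pow_add, Nat.add_sub_cancel' hzle]
    rw [hP1, mul_pow, hr]
    calc Real.Gamma (↑z + ↑y₁ + a₁) / ↑z.factorial * (((b₂ / n₂ + 2) / (b₁ / n₁ + 2)) ^ z * P₂ ^ z) *
        (Real.Gamma (↑(zdot - z) + ↑y₂ + a₂) / ↑(zdot - z).factorial * P₂ ^ (zdot - z))
        = (P₂ ^ z * P₂ ^ (zdot - z)) * (Real.Gamma (↑z + ↑y₁ + a₁) / ↑z.factorial *
          (Real.Gamma (↑(zdot - z) + ↑y₂ + a₂) / ↑(zdot - z).factorial) *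
          ((b₂ / n₂ + 2) / (b₁ / n₁ + 2)) ^ z) := by ring
      _ = _ := by rw [this]
  rw [pgPred, hden, hP1]
  have hnum : Real.Gamma (↑z₁ + ↑y₁ + a₁) / ↑z₁.factorial * (r * P₂) ^ z₁ *
      (Real.Gamma (↑z₂ + ↑y₂ + a₂) / ↑z₂.factorial * P₂ ^ z₂) =
      ((Real.Gamma (z₁ + y₁ + a₁) / (Nat.factorial z₁)) *
        (Real.Gamma (z₂ + y₂ + a₂) / (Nat.factorial z₂)) * r ^ z₁) * P₂ ^ zdot := by
    rw [mul_pow, ← hz, pow_add]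
    ring
  rw [hnum]
  rw [mul_comm (P₂ ^ zdot) _, mul_div_mul_right _ _ (by positivity : (P₂:ℝ) ^ zdot ≠ 0)]

/-- The privacy ratio of the two-group constrained Poisson-gamma synthesizer factorizes
into a ratio of normalizing constants and a product of gamma-function ratios: the
geometric factors `(nᵢ/(bᵢ+2nᵢ))^{zᵢ}` cancel. -/
theorem stmt_19 (n₁ n₂ b₁ b₂ a₁ a₂ : ℝ)
    (hn₁ : 0 < n₁) (hn₂ : 0 < n₂) (hb₁ : 0 < b₁) (hb₂ : 0 < b₂)
    (ha₁ : 0 < a₁) (ha₂ : 0 < a₂)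
    (y₁ y₂ x₁ x₂ zdot z₁ z₂ : ℕ)
    (hsum : x₁ + x₂ = y₁ + y₂)
    (hnbr : |(x₁ : ℤ) - (y₁ : ℤ)| + |(x₂ : ℤ) - (y₂ : ℤ)| = 2)
    (hz : z₁ + z₂ = zdot) :
    pgPred n₁ n₂ b₁ b₂ a₁ a₂ y₁ y₂ zdot z₁ z₂ /
        pgPred n₁ n₂ b₁ b₂ a₁ a₂ x₁ x₂ zdot z₁ z₂ =
      (pgC n₁ n₂ b₁ b₂ a₁ a₂ x₁ x₂ zdot / pgC n₁ n₂ b₁ b₂ a₁ a₂ y₁ y₂ zdot) *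
        (Real.Gamma (z₁ + y₁ + a₁) / Real.Gamma (z₁ + x₁ + a₁)) *
          (Real.Gamma (z₂ + y₂ + a₂) / Real.Gamma (z₂ + x₂ + a₂)) := by
  rw [pgPred_eq n₁ n₂ b₁ b₂ a₁ a₂ hn₁ hn₂ hb₁ hb₂ y₁ y₂ zdot z₁ z₂ hz,
      pgPred_eq n₁ n₂ b₁ b₂ a₁ a₂ hn₁ hn₂ hb₁ hb₂ x₁ x₂ zdot z₁ z₂ hz]
  have hCy : pgC n₁ n₂ b₁ b₂ a₁ a₂ y₁ y₂ zdot ≠ 0 := by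
    rw [pgC]; exact ne_of_gt (pgC_pos n₁ n₂ b₁ b₂ a₁ a₂ hn₁ hn₂ hb₁ hb₂ ha₁ ha₂ y₁ y₂ zdot)
  have hCx : pgC n₁ n₂ b₁ b₂ a₁ a₂ x₁ x₂ zdot ≠ 0 := by
    rw [pgC]; exact ne_of_gt (pgC_pos n₁ n₂ b₁ b₂ a₁ a₂ hn₁ hn₂ hb₁ hb₂ ha₁ ha₂ x₁ x₂ zdot)
  have hG1 : Real.Gamma (z₁ + x₁ + a₁) ≠ 0 := ne_of_gt (Real.Gamma_pos_of_pos (by positivity))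
  have hG2 : Real.Gamma (z₂ + x₂ + a₂) ≠ 0 := ne_of_gt (Real.Gamma_pos_of_pos (by positivity))
  have hf1 : ((Nat.factorial z₁ : ℝ)) ≠ 0 := by positivity
  have hf2 : ((Nat.factorial z₂ : ℝ)) ≠ 0 := by positivity
  have hrpow : ((b₂ / n₂ + 2) / (b₁ / n₁ + 2)) ^ z₁ ≠ 0 := by positivity
  field_simp
end
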